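/- arXiv:0808.2524 — 3 statements merged into one kernel-verified Lean document; each statement's English description precedes it below -/
import Mathlib

section
/- For self-adjoint operators a, b, equality tr((ab)^2) = tr(a^2 b^2) holds if and only if ab = ba. -/
open Matrix

lemma trace_conjTranspose_mul_self_eq_zero_iff {n : ℕ}
    (A : Matrix (Fin n) (Fin n) ℂ) :
    Matrix.trace (Aᴴ * A) = 0 ↔ A = 0 := by
  constructor
  · intro h
    have h' : ∑ i, ∑ j, (Complex.normSq (A j i) : ℂ) = 0 := by
      rw [← h]
      simp only [Matrix.trace, Matrix.diag, Matrix.mul_apply, Matrix.conjTranspose_apply]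
      refine Finset.sum_congr rfl fun i _ => Finset.sum_congr rfl fun j _ => ?_
      rw [Complex.star_def, Complex.conj_mul']
      simp [Complex.normSq_eq_norm_sq]
    have h'' : ∑ i, ∑ j, Complex.normSq (A j i) = 0 := by
      exact_mod_cast h'
    rw [Finset.sum_eq_zero_iff_of_nonneg (fun i _ => Finset.sum_nonneg
      (fun j _ => Complex.normSq_nonneg _))] at h''
    ext j i
    have := h'' i (Finset.mem_univ i)
    rw [Finset.sum_eq_zero_iff_of_nonneg (fun j _ => Complex.normSq_nonneg _)] at this
    simpa using Complex.normSq_eq_zero.mp (this j (Finset.mem_univ j))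
  · intro h; simp [h]

/-- For Hermitian matrices `a`, `b`, equality `tr((ab)^2) = tr(a^2 b^2)` holds
iff `a` and `b` commute. -/
theorem trace_sq_mul_eq_iff_commute {n : ℕ} (a b : Matrix (Fin n) (Fin n) ℂ)
    (ha : a.IsHermitian) (hb : b.IsHermitian) :
    Matrix.trace ((a * b) ^ 2) = Matrix.trace (a ^ 2 * b ^ 2) ↔ a * b = b * a := by
  set c := a * b - b * a with hc
  have hcT : cᴴ = -c := by
    simp [hc, Matrix.conjTranspose_sub, Matrix.conjTranspose_mul, ha.eq, hb.eq]
  have key : Matrix.trace (cᴴ * c)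
      = 2 * (Matrix.trace (a ^ 2 * b ^ 2) - Matrix.trace ((a * b) ^ 2)) := by
    rw [hcT, hc]
    have h1 : Matrix.trace (b * a * (a * b)) = Matrix.trace (a ^ 2 * b ^ 2) := by
      rw [Matrix.trace_mul_comm]; ring_nf
      rw [show a * b * (b * a) = a * (b * b * a) by noncomm_ring,
        Matrix.trace_mul_comm, show b * b * a * a = b^2 * a^2 by noncomm_ring,
        Matrix.trace_mul_comm]
    have h2 : Matrix.trace (a * b * (b * a)) = Matrix.trace (a ^ 2 * b ^ 2) := by
      rw [show a * b * (b * a) = a * (b * b * a) by noncomm_ring,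
        Matrix.trace_mul_comm, show b * b * a * a = b^2 * a^2 by noncomm_ring,
        Matrix.trace_mul_comm]
    have h3 : Matrix.trace (b * a * (b * a)) = Matrix.trace ((a * b) ^ 2) := by
      rw [mul_assoc, Matrix.trace_mul_comm, show a * (b * a) * b = (a*b)^2 by noncomm_ring]
    rw [Matrix.neg_mul, Matrix.trace_neg, Matrix.sub_mul, Matrix.mul_sub, Matrix.mul_sub,
      Matrix.trace_sub, Matrix.trace_sub, Matrix.trace_sub, h1, h2, h3,
      show a * b * (a * b) = (a*b)^2 by rw [pow_two]]
    ring
  constructor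
  · intro h
    have hz : Matrix.trace (cᴴ * c) = 0 := by rw [key, h]; ring
    have : c = 0 := (trace_conjTranspose_mul_self_eq_zero_iff c).mp hz
    have := sub_eq_zero.mp this
    exact this
  · intro h
    have : (a * b) ^ 2 = a ^ 2 * b ^ 2 := by
      rw [pow_two, pow_two, pow_two, show a * b * (a * b) = a * (b * a) * b by noncomm_ring,
        ← h]
      noncomm_ring
    rw [this]
end

section
/- The differential of the matrix exponential is metric-expanding: for Hermitian matrices x and y, ‖e^{-x/2} (D exp)_x(y) e^{-x/2}‖_F ≥ ‖y‖_F, where (D exp)_x(y) = d/dt|_{t=0} exp(x + ty). -/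
open Matrix
noncomputable section

/-- matrix exponential -/
def mexp {n : ℕ} (x : Matrix (Fin n) (Fin n) ℂ) : Matrix (Fin n) (Fin n) ℂ :=
  NormedSpace.exp x

/-- logarithm of a positive definite (Hermitian) matrix, via spectral decomposition -/
def mlog {n : ℕ} (p : Matrix (Fin n) (Fin n) ℂ) : Matrix (Fin n) (Fin n) ℂ :=
  if h : p.IsHermitian then
    (h.eigenvectorUnitary : Matrix (Fin n) (Fin n) ℂ) *
      Matrix.diagonal (fun i => (Real.log (h.eigenvalues i) : ℂ)) *
      (star (h.eigenvectorUnitary : Matrix (Fin n) (Fin n) ℂ))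
  else 0

/-- Frobenius norm -/
def frob {n : ℕ} (a : Matrix (Fin n) (Fin n) ℂ) : ℝ :=
  Real.sqrt (Matrix.trace (aᴴ * a)).re

/-- p^{1/2} for positive definite p -/
def psqrt {n : ℕ} (p : Matrix (Fin n) (Fin n) ℂ) : Matrix (Fin n) (Fin n) ℂ :=
  mexp ((1/2 : ℝ) • mlog p)

/-- geodesic distance on positive definite matrices -/
def gdist {n : ℕ} (p q : Matrix (Fin n) (Fin n) ℂ) : ℝ :=
  frob (mlog ((psqrt p)⁻¹ * q * (psqrt p)⁻¹))

attribute [local instance] Matrix.frobeniusNormedAddCommGroup Matrix.frobeniusNormedSpace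


/- ### Auxiliary lemmas -/

section AuxScalar

lemma u_summable (c B : ℝ) (hB : 0 ≤ B) :
    Summable (fun k : ℕ => (k.factorial : ℝ)⁻¹ * (k * (c * B ^ (k - 1)))) := by
  rw [← summable_nat_add_iff 1]
  have h := (Real.summable_pow_div_factorial B).mul_left c
  refine h.congr fun k => ?_
  have hf : ((k+1).factorial : ℝ) = (k+1) * (k.factorial : ℝ) := by
    push_cast [Nat.factorial_succ]; ring
  have hk0 : (k.factorial : ℝ) ≠ 0 := Nat.cast_ne_zero.mpr k.factorial_ne_zero
  have : (k + 1 : ℕ) - 1 = k := by omega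
  rw [this, hf]
  push_cast
  field_simp

def phi (p q : ℝ) : ℝ :=
  ∑' k : ℕ, (k.factorial : ℝ)⁻¹ * ∑ j ∈ Finset.range k, p ^ j * q ^ (k - 1 - j)

lemma phi_term_summable (p q : ℝ) :
    Summable (fun k : ℕ => (k.factorial : ℝ)⁻¹ * ∑ j ∈ Finset.range k, p ^ j * q ^ (k - 1 - j)) := by
  set B : ℝ := |p| + |q| with hBdef
  refine Summable.of_norm_bounded (u_summable 1 B (by positivity)) fun k => ?_
  rw [Real.norm_eq_abs, abs_mul, abs_inv, Nat.abs_cast]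
  gcongr (k.factorial : ℝ)⁻¹ * ?_
  calc |∑ j ∈ Finset.range k, p ^ j * q ^ (k - 1 - j)|
      ≤ ∑ j ∈ Finset.range k, |p ^ j * q ^ (k - 1 - j)| := Finset.abs_sum_le_sum_abs _ _
  _ ≤ ∑ j ∈ Finset.range k, B ^ (k - 1) := by
      refine Finset.sum_le_sum fun j hj => ?_
      rw [Finset.mem_range] at hj
      rw [abs_mul, abs_pow, abs_pow]
      calc |p| ^ j * |q| ^ (k - 1 - j) ≤ B ^ j * B ^ (k - 1 - j) := by
            gcongr <;> simp [hBdef, abs_nonneg, le_add_of_nonneg_right, le_add_of_nonneg_left]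
      _ = B ^ (k - 1) := by rw [← pow_add]; congr 1; omega
  _ = k * (1 * B ^ (k - 1)) := by simp [mul_comm]

lemma real_exp_tsum (r : ℝ) : Real.exp r = ∑' k : ℕ, r ^ k / k.factorial := by
  rw [Real.exp_eq_exp_ℝ, NormedSpace.exp_eq_tsum_div]

lemma phi_eq_of_ne (p q : ℝ) (h : p ≠ q) :
    phi p q = (Real.exp p - Real.exp q) / (p - q) := by
  have hpq : p - q ≠ 0 := sub_ne_zero.mpr h
  have hterm : ∀ k : ℕ, (k.factorial : ℝ)⁻¹ * ∑ j ∈ Finset.range k, p ^ j * q ^ (k - 1 - j)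
      = (p ^ k / k.factorial - q ^ k / k.factorial) / (p - q) := by
    intro k
    have hg := geom_sum₂_mul p q k
    have hk0 : (k.factorial : ℝ) ≠ 0 := Nat.cast_ne_zero.mpr k.factorial_ne_zero
    have hsum_eq : ∑ j ∈ Finset.range k, p ^ j * q ^ (k - 1 - j) = (p ^ k - q ^ k) / (p - q) := by
      rw [eq_div_iff hpq]; exact hg
    rw [hsum_eq]
    field_simp
  rw [phi]
  simp_rw [hterm]
  rw [tsum_div_const, Summable.tsum_sub (Real.summable_pow_div_factorial p)
    (Real.summable_pow_div_factorial q), ← real_exp_tsum, ← real_exp_tsum]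

lemma phi_self (p : ℝ) : phi p p = Real.exp p := by
  have hterm : ∀ k : ℕ, (k.factorial : ℝ)⁻¹ * ∑ j ∈ Finset.range k, p ^ j * p ^ (k - 1 - j)
      = (k.factorial : ℝ)⁻¹ * (k * p ^ (k - 1)) := by
    intro k
    congr 1
    calc ∑ j ∈ Finset.range k, p ^ j * p ^ (k - 1 - j) = ∑ j ∈ Finset.range k, p ^ (k - 1) := by
          refine Finset.sum_congr rfl fun j hj => ?_
          rw [Finset.mem_range] at hj
          rw [← pow_add]
          congr 1
          omega
    _ = k * p ^ (k - 1) := by simp [mul_comm]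
  have hsum : Summable (fun k : ℕ => (k.factorial : ℝ)⁻¹ * (k * p ^ (k - 1))) :=
    (phi_term_summable p p).congr (fun k => hterm k)
  rw [phi]
  simp_rw [hterm]
  rw [Summable.tsum_eq_zero_add hsum]
  have h0 : (Nat.factorial 0 : ℝ)⁻¹ * ((0:ℕ) * p ^ (0 - 1)) = 0 := by simp
  rw [h0, zero_add]
  have h1 : ∀ k : ℕ, ((k+1).factorial : ℝ)⁻¹ * (((k:ℝ)+1) * p ^ (k + 1 - 1)) = p ^ k / k.factorial := by
    intro k
    have hf : ((k+1).factorial : ℝ) = ((k:ℝ)+1) * (k.factorial : ℝ) := by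
      push_cast [Nat.factorial_succ]; ring
    have hk0 : (k.factorial : ℝ) ≠ 0 := Nat.cast_ne_zero.mpr k.factorial_ne_zero
    rw [Nat.add_sub_cancel, hf]
    field_simp
  rw [real_exp_tsum]
  refine tsum_congr fun k => ?_
  push_cast
  exact h1 k

lemma one_le_sinh_div (c : ℝ) (hc : c ≠ 0) : 1 ≤ Real.sinh c / c := by
  rcases hc.lt_or_gt with h | h
  · rw [← neg_div_neg_eq, ← Real.sinh_neg]
    rw [le_div_iff₀ (by linarith)]
    have := (Real.self_lt_sinh_iff (x := -c)).2 (by linarith)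
    linarith
  · rw [le_div_iff₀ h]
    have := (Real.self_lt_sinh_iff (x := c)).2 h
    linarith

lemma one_le_weight (p q : ℝ) :
    1 ≤ Real.exp (-(p/2)) * Real.exp (-(q/2)) * phi p q := by
  rcases eq_or_ne p q with rfl | h
  · rw [phi_self, ← Real.exp_add, ← Real.exp_add]
    simp [show -(p/2) + -(p/2) + p = 0 by ring]
  · rw [phi_eq_of_ne p q h, ← Real.exp_add]
    set s : ℝ := (p + q)/2 with hs
    set c : ℝ := (p - q)/2 with hcdef
    have hc : c ≠ 0 := by
      simp only [hcdef, div_ne_zero_iff]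
      exact ⟨sub_ne_zero.mpr h, two_ne_zero⟩
    have hss : -(p/2) + -(q/2) = -s := by rw [hs]; ring
    have e1 : Real.exp (-s) * Real.exp p = Real.exp c := by
      rw [← Real.exp_add]; congr 1; rw [hs, hcdef]; ring
    have e2 : Real.exp (-s) * Real.exp q = Real.exp (-c) := by
      rw [← Real.exp_add]; congr 1; rw [hs, hcdef]; ring
    have hpq2 : p - q = 2 * c := by rw [hcdef]; ring
    have key : Real.exp (-s) * ((Real.exp p - Real.exp q) / (p - q)) = Real.sinh c / c := by
      rw [Real.sinh_eq, hpq2, div_div, ← mul_div_assoc, mul_sub, e1, e2]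
    rw [hss, key]
    exact one_le_sinh_div c hc

end AuxScalar

section AuxFrob

variable {n : ℕ}

lemma trace_conj_re (a : Matrix (Fin n) (Fin n) ℂ) :
    (Matrix.trace (aᴴ * a)).re = ∑ i, ∑ j, Complex.normSq (a i j) := by
  rw [Matrix.trace]
  simp only [Matrix.diag_apply, Matrix.mul_apply, Matrix.conjTranspose_apply]
  rw [Complex.re_sum]
  rw [Finset.sum_comm]
  refine Finset.sum_congr rfl fun i _ => ?_
  rw [Complex.re_sum]
  refine Finset.sum_congr rfl fun j _ => ?_
  simp [Complex.normSq_apply, Complex.mul_re]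

lemma frob_eq (a : Matrix (Fin n) (Fin n) ℂ) :
    frob a = Real.sqrt (∑ i, ∑ j, Complex.normSq (a i j)) := by
  rw [frob, trace_conj_re]

lemma frob_conj_unitary (U A : Matrix (Fin n) (Fin n) ℂ)
    (h1 : star U * U = 1) (h2 : U * star U = 1) :
    frob (star U * A * U) = frob A := by
  rw [frob, frob]
  congr 2
  have hct : (star U * A * U)ᴴ = star U * Aᴴ * U := by
    rw [Matrix.conjTranspose_mul, Matrix.conjTranspose_mul]
    rw [← Matrix.star_eq_conjTranspose U, ← Matrix.star_eq_conjTranspose (star U)]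
    rw [star_star, mul_assoc]
  rw [hct]
  have : star U * Aᴴ * U * (star U * A * U) = star U * (Aᴴ * A) * U := by
    calc star U * Aᴴ * U * (star U * A * U) = star U * Aᴴ * (U * star U) * (A * U) := by
          simp only [mul_assoc]
    _ = star U * (Aᴴ * A) * U := by rw [h2]; simp only [mul_one, mul_assoc]
  rw [this, Matrix.trace_mul_cycle, ← mul_assoc, h2, one_mul]

lemma frob_le_frob (A B : Matrix (Fin n) (Fin n) ℂ)
    (h : ∀ i j, Complex.normSq (A i j) ≤ Complex.normSq (B i j)) : frob A ≤ frob B := by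
  rw [frob_eq, frob_eq]
  apply Real.sqrt_le_sqrt
  exact Finset.sum_le_sum fun i _ => Finset.sum_le_sum fun j _ => h i j

end AuxFrob

section AuxDeriv

attribute [local instance] Matrix.frobeniusNormedRing Matrix.frobeniusNormedAlgebra

variable {n : ℕ}

lemma hasDerivAt_pow_aux (x y : Matrix (Fin n) (Fin n) ℂ) (k : ℕ) (t : ℝ) :
    HasDerivAt (fun t : ℝ => (x + t • y) ^ k)
      (∑ j ∈ Finset.range k, (x + t • y) ^ j * y * (x + t • y) ^ (k - 1 - j)) t := by
  induction k with
  | zero =>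
    simp only [pow_zero, Finset.range_zero, Finset.sum_empty]
    exact hasDerivAt_const t (1 : Matrix (Fin n) (Fin n) ℂ)
  | succ k ih =>
    have hbase : HasDerivAt (fun t : ℝ => x + t • y) y t := by
      have h0 := (hasDerivAt_const t x).add ((hasDerivAt_id t).smul_const y)
      simp only [zero_add, one_smul] at h0
      exact h0
    have h := ih.mul hbase
    have heq : (∑ j ∈ Finset.range k, (x + t • y) ^ j * y * (x + t • y) ^ (k - 1 - j)) *
          (x + t • y) + (x + t • y) ^ k * y
        = ∑ j ∈ Finset.range (k+1), (x + t • y) ^ j * y * (x + t • y) ^ (k + 1 - 1 - j) := by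
      rw [Finset.sum_range_succ, Finset.sum_mul]
      congr 1
      · refine Finset.sum_congr rfl fun j hj => ?_
        rw [Finset.mem_range] at hj
        have : k + 1 - 1 - j = (k - 1 - j) + 1 := by omega
        rw [this, mul_assoc, mul_assoc, ← pow_succ, ← mul_assoc]
      · simp
    have hfun : (fun t : ℝ => (x + t • y) ^ k * (x + t • y)) = fun t : ℝ => (x + t • y) ^ (k+1) := by
      funext s; rw [pow_succ]
    rw [← heq, ← hfun]
    exact h

lemma norm_pow_mul_le (p : Matrix (Fin n) (Fin n) ℂ) (m : ℕ) :
    ∀ A : Matrix (Fin n) (Fin n) ℂ, ‖p ^ m * A‖ ≤ ‖p‖ ^ m * ‖A‖ := by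
  induction m with
  | zero => intro A; simp
  | succ m ih =>
    intro A
    calc ‖p ^ (m+1) * A‖ = ‖p ^ m * (p * A)‖ := by rw [pow_succ, mul_assoc]
    _ ≤ ‖p‖ ^ m * ‖p * A‖ := ih _
    _ ≤ ‖p‖ ^ m * (‖p‖ * ‖A‖) := by gcongr; exact norm_mul_le _ _
    _ = ‖p‖ ^ (m+1) * ‖A‖ := by ring

lemma norm_mul_pow_le (p : Matrix (Fin n) (Fin n) ℂ) (m : ℕ) :
    ∀ A : Matrix (Fin n) (Fin n) ℂ, ‖A * p ^ m‖ ≤ ‖A‖ * ‖p‖ ^ m := by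
  induction m with
  | zero => intro A; simp
  | succ m ih =>
    intro A
    calc ‖A * p ^ (m+1)‖ = ‖(A * p) * p ^ m‖ := by rw [pow_succ', ← mul_assoc]
    _ ≤ ‖A * p‖ * ‖p‖ ^ m := ih _
    _ ≤ ‖A‖ * ‖p‖ * ‖p‖ ^ m := by gcongr; exact norm_mul_le _ _
    _ = ‖A‖ * ‖p‖ ^ (m+1) := by ring

lemma norm_bound (x y : Matrix (Fin n) (Fin n) ℂ) (k : ℕ) (t : ℝ) (ht : |t| ≤ 1) :
    ‖(k.factorial : ℂ)⁻¹ • ∑ j ∈ Finset.range k, (x + t • y) ^ j * y * (x + t • y) ^ (k - 1 - j)‖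
      ≤ (k.factorial : ℝ)⁻¹ * (k * (‖y‖ * (‖x‖ + ‖y‖) ^ (k - 1))) := by
  set B : ℝ := ‖x‖ + ‖y‖ with hB
  have hB0 : (0:ℝ) ≤ B := by positivity
  have hp : ‖x + t • y‖ ≤ B := by
    calc ‖x + t • y‖ ≤ ‖x‖ + ‖t • y‖ := norm_add_le _ _
    _ ≤ ‖x‖ + ‖y‖ := by
        rw [norm_smul]
        have : ‖t‖ ≤ 1 := by simpa [Real.norm_eq_abs] using ht
        nlinarith [norm_nonneg y]
  rw [norm_smul]
  gcongr ?_ * ?_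
  · simp
  · calc ‖∑ j ∈ Finset.range k, (x + t • y) ^ j * y * (x + t • y) ^ (k - 1 - j)‖
        ≤ ∑ j ∈ Finset.range k, ‖(x + t • y) ^ j * y * (x + t • y) ^ (k - 1 - j)‖ :=
          norm_sum_le _ _
    _ ≤ ∑ j ∈ Finset.range k, ‖y‖ * B ^ (k-1) := by
        refine Finset.sum_le_sum fun j hj => ?_
        rw [Finset.mem_range] at hj
        calc ‖(x + t • y) ^ j * y * (x + t • y) ^ (k - 1 - j)‖
            = ‖(x + t • y) ^ j * (y * (x + t • y) ^ (k - 1 - j))‖ := by rw [mul_assoc]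
        _ ≤ ‖x + t • y‖ ^ j * ‖y * (x + t • y) ^ (k - 1 - j)‖ := norm_pow_mul_le _ _ _
        _ ≤ ‖x + t • y‖ ^ j * (‖y‖ * ‖x + t • y‖ ^ (k - 1 - j)) := by
              gcongr; exact norm_mul_pow_le _ _ _
        _ ≤ B ^ j * (‖y‖ * B ^ (k - 1 - j)) := by gcongr <;> exact norm_nonneg _
        _ = ‖y‖ * (B ^ j * B ^ (k - 1 - j)) := by ring
        _ = ‖y‖ * B ^ (k - 1) := by rw [← pow_add]; congr 2; omega
    _ = k * (‖y‖ * B ^ (k-1)) := by simp [Finset.sum_const, mul_comm]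

lemma D_eq (x y D : Matrix (Fin n) (Fin n) ℂ)
    (hD : HasDerivAt (fun t : ℝ => NormedSpace.exp (x + t • y)) D 0) :
    Summable (fun k : ℕ => (k.factorial : ℂ)⁻¹ • ∑ j ∈ Finset.range k, x ^ j * y * x ^ (k-1-j)) ∧
    D = ∑' k : ℕ, (k.factorial : ℂ)⁻¹ • ∑ j ∈ Finset.range k, x ^ j * y * x ^ (k-1-j) := by
  set g' : ℕ → ℝ → Matrix (Fin n) (Fin n) ℂ := fun k t =>
    (k.factorial : ℂ)⁻¹ • ∑ j ∈ Finset.range k, (x + t • y) ^ j * y * (x + t • y) ^ (k-1-j)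
    with hg'def
  have hu := u_summable ‖y‖ (‖x‖ + ‖y‖) (by positivity)
  have hg : ∀ (k : ℕ) (t : ℝ), t ∈ Metric.ball (0:ℝ) 1 →
      HasDerivAt (fun t : ℝ => (k.factorial : ℂ)⁻¹ • (x + t • y) ^ k) (g' k t) t :=
    fun k t _ => (hasDerivAt_pow_aux x y k t).const_smul ((k.factorial : ℂ)⁻¹)
  have hgb : ∀ (k : ℕ) (t : ℝ), t ∈ Metric.ball (0:ℝ) 1 →
      ‖g' k t‖ ≤ (k.factorial : ℝ)⁻¹ * (k * (‖y‖ * (‖x‖ + ‖y‖) ^ (k - 1))) := by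
    intro k t ht
    rw [Metric.mem_ball, Real.dist_eq, sub_zero] at ht
    exact norm_bound x y k t ht.le
  have hg0 : Summable fun k : ℕ => (k.factorial : ℂ)⁻¹ • (x + (0:ℝ) • y) ^ k := by
    have h0 := NormedSpace.expSeries_summable' (𝕂 := ℂ) x
    simp only [zero_smul, add_zero]
    exact h0
  have key : HasDerivAt (fun t : ℝ => ∑' k : ℕ, (k.factorial : ℂ)⁻¹ • (x + t • y) ^ k)
      (∑' k : ℕ, g' k 0) 0 :=
    hasDerivAt_tsum_of_isPreconnected hu Metric.isOpen_ball (convex_ball _ _).isPreconnected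
      hg hgb (by simp) hg0 (by simp)
  have hfun : (fun t : ℝ => NormedSpace.exp (x + t • y))
      = fun t : ℝ => ∑' k : ℕ, (k.factorial : ℂ)⁻¹ • (x + t • y) ^ k := by
    funext t
    exact congrFun (NormedSpace.exp_eq_tsum ℂ) (x + t • y)
  rw [hfun] at hD
  constructor
  · have := Summable.of_norm_bounded hu (fun k => hgb k 0 (by simp))
    simp only [hg'def, zero_smul, add_zero] at this
    exact this
  · have := hD.unique key
    simp only [hg'def, zero_smul, add_zero] at this
    exact this

lemma conj_entry_tsum (U : Matrix (Fin n) (Fin n) ℂ) (f : ℕ → Matrix (Fin n) (Fin n) ℂ)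
    (hf : Summable f) (a b : Fin n) :
    (star U * (∑' k, f k) * U) a b = ∑' k, (star U * f k * U) a b := by
  let L : Matrix (Fin n) (Fin n) ℂ →ₗ[ℂ] ℂ :=
    { toFun := fun A => (star U * A * U) a b
      map_add' := fun A B => by
        simp [Matrix.mul_add, Matrix.add_mul]
      map_smul' := fun c A => by
        simp [Matrix.mul_smul, Matrix.smul_mul] }
  exact (LinearMap.toContinuousLinearMap L).map_tsum hf


end AuxDeriv

/-- The differential of the matrix exponential is metric-expanding:
`‖e^{-x/2} (D exp)_x(y) e^{-x/2}‖_F ≥ ‖y‖_F`, where `(D exp)_x(y)` is the derivative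
of `t ↦ exp(x + t y)` at `t = 0`. -/
theorem dexp_expansive {n : ℕ} (x y D : Matrix (Fin n) (Fin n) ℂ)
    (hx : x.IsHermitian) (hy : y.IsHermitian)
    (hD : HasDerivAt (fun t : ℝ => NormedSpace.exp (x + t • y)) D 0) :
    frob y ≤ frob (mexp (-((1/2 : ℝ) • x)) * D * mexp (-((1/2 : ℝ) • x))) := by
  obtain ⟨hsumm, hDeq⟩ := D_eq x y D hD
  set U : Matrix (Fin n) (Fin n) ℂ := (hx.eigenvectorUnitary : Matrix (Fin n) (Fin n) ℂ)
    with hUdef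
  set d : Fin n → ℝ := hx.eigenvalues with hddef
  have h1 : star U * U = 1 := Matrix.mem_unitaryGroup_iff'.mp (hx.eigenvectorUnitary).2
  have h2 : U * star U = 1 := Matrix.mem_unitaryGroup_iff.mp (hx.eigenvectorUnitary).2
  set Λ : Matrix (Fin n) (Fin n) ℂ := diagonal (fun i => (d i : ℂ)) with hΛ
  have hspec : x = U * Λ * star U := by
    have h := hx.spectral_theorem
    rw [Unitary.conjStarAlgAut_apply] at h
    exact h
  set w : Matrix (Fin n) (Fin n) ℂ := star U * y * U with hw
  have hconj_mul : ∀ A B : Matrix (Fin n) (Fin n) ℂ,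
      (star U * A * U) * (star U * B * U) = star U * (A * B) * U := by
    intro A B
    calc (star U * A * U) * (star U * B * U)
        = star U * A * (U * star U) * (B * U) := by simp only [mul_assoc]
    _ = star U * (A * B) * U := by rw [h2]; simp only [mul_one, mul_assoc]
  have hconjx : star U * x * U = Λ := by
    rw [hspec]
    calc star U * (U * Λ * star U) * U = (star U * U) * Λ * (star U * U) := by
          simp only [mul_assoc]
    _ = Λ := by rw [h1]; simp
  have hconjpow : ∀ j : ℕ, star U * x ^ j * U = Λ ^ j := by
    intro j
    induction j with
    | zero => simpa using h1
    | succ j ih =>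
      rw [pow_succ, pow_succ, ← ih, ← hconjx, hconj_mul]
  have hterm : ∀ k : ℕ, star U * ((k.factorial : ℂ)⁻¹ •
        ∑ j ∈ Finset.range k, x ^ j * y * x ^ (k-1-j)) * U
      = (k.factorial : ℂ)⁻¹ • ∑ j ∈ Finset.range k, Λ ^ j * w * Λ ^ (k-1-j) := by
    intro k
    rw [Matrix.mul_smul, Matrix.smul_mul]
    congr 1
    rw [Finset.mul_sum, Finset.sum_mul]
    refine Finset.sum_congr rfl fun j hj => ?_
    rw [← hconjpow j, ← hconjpow (k-1-j), hw, hconj_mul, hconj_mul]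
  have hentry : ∀ (j m : ℕ) (a b : Fin n),
      (Λ ^ j * w * Λ ^ m) a b = (d a : ℂ) ^ j * w a b * (d b : ℂ) ^ m := by
    intro j m a b
    rw [hΛ, Matrix.diagonal_pow, Matrix.diagonal_pow, Matrix.mul_diagonal, Matrix.diagonal_mul]
    simp [Pi.pow_apply]
  have hSab : ∀ a b : Fin n,
      (star U * D * U) a b = ((phi (d a) (d b) : ℝ) : ℂ) * w a b := by
    intro a b
    rw [hDeq, conj_entry_tsum U _ hsumm a b]
    have hk : ∀ k : ℕ, (star U * ((k.factorial : ℂ)⁻¹ •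
          ∑ j ∈ Finset.range k, x ^ j * y * x ^ (k-1-j)) * U) a b
        = ((((k.factorial : ℝ)⁻¹ * ∑ j ∈ Finset.range k, (d a) ^ j * (d b) ^ (k-1-j) : ℝ)) : ℂ)
            * w a b := by
      intro k
      rw [hterm k, Matrix.smul_apply, Matrix.sum_apply]
      simp_rw [hentry]
      push_cast
      rw [smul_eq_mul]
      rw [show ∑ j ∈ Finset.range k, (d a : ℂ) ^ j * w a b * (d b : ℂ) ^ (k-1-j)
          = (∑ j ∈ Finset.range k, (d a : ℂ) ^ j * (d b : ℂ) ^ (k-1-j)) * w a b by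
        rw [Finset.sum_mul]; exact Finset.sum_congr rfl fun j _ => by ring]
      ring
    rw [tsum_congr hk, tsum_mul_right, ← Complex.ofReal_tsum]
    rfl
  -- exponential part
  have hUinv : U⁻¹ = star U := Matrix.inv_eq_left_inv h1
  have hUu : IsUnit U := ⟨⟨U, star U, h2, h1⟩, rfl⟩
  set E : Matrix (Fin n) (Fin n) ℂ := diagonal (fun i => (Real.exp (-(d i)/2) : ℂ)) with hE
  have hsmul : -((1/2:ℝ) • x) = U * diagonal (fun i => ((-(d i)/2 : ℝ) : ℂ)) * star U := by
    rw [hspec]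
    have step : -((1/2:ℝ) • (U * Λ * star U)) = U * (-((1/2:ℝ) • Λ)) * star U := by
      simp [smul_mul_assoc, mul_smul_comm]
    rw [step]
    congr 1
    congr 1
    rw [hΛ]
    ext i j
    rcases eq_or_ne i j with rfl | hij
    · simp [Matrix.diagonal_apply_eq, Complex.real_smul]
      push_cast
      ring
    · simp [Matrix.diagonal_apply_ne _ hij]
  have hexpE : mexp (-((1/2:ℝ) • x)) = U * E * star U := by
    rw [hsmul, ← hUinv, mexp, Matrix.exp_conj U _ hUu, Matrix.exp_diagonal]
    have h3 : NormedSpace.exp (fun i => ((-(d i)/2 : ℝ) : ℂ))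
        = fun i => (Real.exp (-(d i)/2) : ℂ) := by
      funext i
      rw [Pi.coe_exp, ← Complex.exp_eq_exp_ℂ, ← Complex.ofReal_exp]
    rw [h3, hUinv, hE]
  set M : Matrix (Fin n) (Fin n) ℂ :=
    mexp (-((1/2:ℝ) • x)) * D * mexp (-((1/2:ℝ) • x)) with hM
  have hMconj : star U * M * U = E * (star U * D * U) * E := by
    rw [hM, hexpE]
    calc star U * (U * E * star U * D * (U * E * star U)) * U
        = (star U * U) * (E * ((star U * D * U) * (E * (star U * U)))) := by
          simp only [mul_assoc]
    _ = E * (star U * D * U) * E := by rw [h1]; simp only [one_mul, mul_one, mul_assoc]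
  have hMab : ∀ a b : Fin n, (star U * M * U) a b
      = ((Real.exp (-(d a)/2) * Real.exp (-(d b)/2) * phi (d a) (d b) : ℝ) : ℂ) * w a b := by
    intro a b
    rw [hMconj, hE, Matrix.mul_diagonal, Matrix.diagonal_mul, hSab a b]
    push_cast
    ring
  have hfin : frob w ≤ frob (star U * M * U) := by
    refine frob_le_frob _ _ fun a b => ?_
    rw [hMab a b]
    set g : ℝ := Real.exp (-(d a)/2) * Real.exp (-(d b)/2) * phi (d a) (d b) with hg
    have hg1 : 1 ≤ g := by
      have := one_le_weight (d a) (d b)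
      rw [hg, neg_div, neg_div]
      exact this
    rw [Complex.normSq_mul, Complex.normSq_ofReal]
    have hgg : (0:ℝ) ≤ g * g - 1 := by nlinarith
    have := mul_nonneg (Complex.normSq_nonneg (w a b)) hgg
    nlinarith
  calc frob y = frob w := (frob_conj_unitary U y h1 h2).symm
  _ ≤ frob (star U * M * U) := hfin
  _ = frob M := frob_conj_unitary U M h1 h2
end
end

section
/- In the space of positive definite matrices with distance dist(p,q) = ‖log(p^{-1/2} q p^{-1/2})‖_F, a Cauchy sequence converges: if (p_n) is Cauchy for dist, then there is a positive definite p with dist(p_n, p) → 0. -/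
open Matrix
open scoped ComplexOrder
noncomputable section

open Filter

section AuxiliaryLemmas

variable {n : ℕ}

lemma unitary_inv_eq_star (U : Matrix (Fin n) (Fin n) ℂ)
    (hU : U ∈ Matrix.unitaryGroup (Fin n) ℂ) : U⁻¹ = star U :=
  Matrix.inv_eq_left_inv (Matrix.UnitaryGroup.star_mul_self ⟨U, hU⟩)

lemma unitary_isUnit (U : Matrix (Fin n) (Fin n) ℂ)
    (hU : U ∈ Matrix.unitaryGroup (Fin n) ℂ) : IsUnit U :=
  Matrix.isUnit_iff_isUnit_det U |>.mpr (Matrix.UnitaryGroup.det_isUnit ⟨U, hU⟩)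

lemma mexp_conj_diag (U : Matrix (Fin n) (Fin n) ℂ)
    (hU : U ∈ Matrix.unitaryGroup (Fin n) ℂ) (v : Fin n → ℝ) :
    mexp (U * Matrix.diagonal (fun i => (v i : ℂ)) * star U)
      = U * Matrix.diagonal (fun i => (Real.exp (v i) : ℂ)) * star U := by
  have hd : NormedSpace.exp (fun i => (v i : ℂ)) = fun i => (Real.exp (v i) : ℂ) := by
    funext i
    rw [Pi.coe_exp, ← Complex.exp_eq_exp_ℂ, ← Complex.ofReal_exp]
  rw [← unitary_inv_eq_star U hU, mexp, Matrix.exp_conj U _ (unitary_isUnit U hU),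
    Matrix.exp_diagonal, hd]

section psqrtLemmas

lemma psqrt_eq {p : Matrix (Fin n) (Fin n) ℂ} (hp : p.PosDef) :
    psqrt p = (hp.1.eigenvectorUnitary : Matrix (Fin n) (Fin n) ℂ) *
      Matrix.diagonal (fun i => (Real.sqrt (hp.1.eigenvalues i) : ℂ)) *
      (star (hp.1.eigenvectorUnitary : Matrix (Fin n) (Fin n) ℂ)) := by
  set U : Matrix (Fin n) (Fin n) ℂ := (hp.1.eigenvectorUnitary : Matrix (Fin n) (Fin n) ℂ)
  have hUmem : U ∈ Matrix.unitaryGroup (Fin n) ℂ := (hp.1.eigenvectorUnitary).2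
  have hdiag : (1/2 : ℝ) • Matrix.diagonal (fun i => (Real.log (hp.1.eigenvalues i) : ℂ))
      = Matrix.diagonal (fun i => ((1/2 * Real.log (hp.1.eigenvalues i) : ℝ) : ℂ)) := by
    ext i j
    rw [Matrix.smul_apply]
    rcases eq_or_ne i j with rfl | h
    · simp [Matrix.diagonal_apply_eq, Complex.real_smul]
    · simp [Matrix.diagonal_apply_ne _ h]
  have h1 : (1/2 : ℝ) • mlog p =
      U * Matrix.diagonal (fun i => ((1/2 * Real.log (hp.1.eigenvalues i) : ℝ) : ℂ)) * star U := by
    rw [mlog, dif_pos hp.1, ← Matrix.smul_mul, ← Matrix.mul_smul, hdiag]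
  have hfun : (fun i => (Real.exp (1/2 * Real.log (hp.1.eigenvalues i)) : ℂ))
      = fun i => (Real.sqrt (hp.1.eigenvalues i) : ℂ) := by
    funext i
    have hpos : 0 < hp.1.eigenvalues i := hp.eigenvalues_pos i
    rw [mul_comm, ← Real.rpow_def_of_pos hpos, ← Real.sqrt_eq_rpow]
  rw [psqrt, h1, mexp_conj_diag U hUmem, hfun]

lemma psqrt_hermitian {p : Matrix (Fin n) (Fin n) ℂ} (hp : p.PosDef) :
    (psqrt p)ᴴ = psqrt p := by
  rw [psqrt_eq hp]
  apply Matrix.isHermitian_mul_mul_conjTranspose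
  apply Matrix.isHermitian_diagonal_of_self_adjoint
  funext i
  exact Complex.conj_ofReal _

lemma psqrt_mul_self {p : Matrix (Fin n) (Fin n) ℂ} (hp : p.PosDef) :
    psqrt p * psqrt p = p := by
  set U : Matrix (Fin n) (Fin n) ℂ := (hp.1.eigenvectorUnitary : Matrix (Fin n) (Fin n) ℂ)
  have hsU : star U * U = 1 := Matrix.UnitaryGroup.star_mul_self ⟨U, (hp.1.eigenvectorUnitary).2⟩
  rw [psqrt_eq hp]
  calc (U * Matrix.diagonal (fun i => (Real.sqrt (hp.1.eigenvalues i) : ℂ)) * star U) *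
      (U * Matrix.diagonal (fun i => (Real.sqrt (hp.1.eigenvalues i) : ℂ)) * star U)
      = U * (Matrix.diagonal (fun i => (Real.sqrt (hp.1.eigenvalues i) : ℂ)) *
        ((star U * U) * Matrix.diagonal (fun i => (Real.sqrt (hp.1.eigenvalues i) : ℂ)))) * star U := by
        simp only [Matrix.mul_assoc]
    _ = U * Matrix.diagonal (RCLike.ofReal ∘ hp.1.eigenvalues) * star U := by
        rw [hsU, one_mul, Matrix.diagonal_mul_diagonal]
        have hd : (fun i => ((Real.sqrt (hp.1.eigenvalues i) : ℂ) *
            (Real.sqrt (hp.1.eigenvalues i) : ℂ)))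
            = (RCLike.ofReal ∘ hp.1.eigenvalues : Fin n → ℂ) := by
          funext i
          rw [← Complex.ofReal_mul, Real.mul_self_sqrt (hp.eigenvalues_pos i).le]
          rfl
        rw [hd]
    _ = p := (hp.1.spectral_theorem).symm

lemma psqrt_isUnit {p : Matrix (Fin n) (Fin n) ℂ} (hp : p.PosDef) :
    IsUnit (psqrt p) := Matrix.isUnit_exp _

end psqrtLemmas

section loewner

lemma unitary_mul_star_self (U : Matrix (Fin n) (Fin n) ℂ)
    (hU : U ∈ Matrix.unitaryGroup (Fin n) ℂ) : U * star U = 1 := hU.2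

lemma unitary_star_mul_self (U : Matrix (Fin n) (Fin n) ℂ)
    (hU : U ∈ Matrix.unitaryGroup (Fin n) ℂ) : star U * U = 1 := hU.1

lemma psd_conj_iff (U : Matrix (Fin n) (Fin n) ℂ)
    (hU : U ∈ Matrix.unitaryGroup (Fin n) ℂ) (E : Matrix (Fin n) (Fin n) ℂ) :
    (U * E * star U).PosSemidef ↔ E.PosSemidef := by
  constructor
  · intro h
    have := h.conjTranspose_mul_mul_same U
    rw [show Uᴴ * (U * E * star U) * U = (Uᴴ * U) * E * (star U * U) by
      simp only [Matrix.mul_assoc]] at this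
    rw [← Matrix.star_eq_conjTranspose U, unitary_star_mul_self U hU, one_mul, mul_one] at this
    exact this
  · intro h
    have := h.mul_mul_conjTranspose_same U
    rwa [← Matrix.star_eq_conjTranspose U] at this

lemma conj_diag_eq_sub {m : Matrix (Fin n) (Fin n) ℂ} (hm : m.IsHermitian) (c : ℝ) :
    (hm.eigenvectorUnitary : Matrix (Fin n) (Fin n) ℂ) *
      Matrix.diagonal (fun i => ((hm.eigenvalues i - c : ℝ) : ℂ)) *
      (star (hm.eigenvectorUnitary : Matrix (Fin n) (Fin n) ℂ))
      = m - (c : ℂ) • 1 := by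
  set U : Matrix (Fin n) (Fin n) ℂ := (hm.eigenvectorUnitary : Matrix (Fin n) (Fin n) ℂ)
  have hUs : U * star U = 1 := unitary_mul_star_self U (hm.eigenvectorUnitary).2
  have hd : Matrix.diagonal (fun i => ((hm.eigenvalues i - c : ℝ) : ℂ))
      = Matrix.diagonal (RCLike.ofReal ∘ hm.eigenvalues) - (c : ℂ) • 1 := by
    ext i j
    rcases eq_or_ne i j with rfl | h
    · simp [Matrix.diagonal_apply_eq, Matrix.smul_apply, Matrix.one_apply_eq]
    · simp [Matrix.diagonal_apply_ne _ h, Matrix.smul_apply, Matrix.one_apply_ne h]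
  rw [hd, Matrix.mul_sub, Matrix.sub_mul, show U * Matrix.diagonal (RCLike.ofReal ∘ hm.eigenvalues) * star U = m from hm.spectral_theorem.symm]
  congr 1
  rw [Matrix.mul_smul, Matrix.smul_mul, mul_one, hUs]

lemma sub_smul_one_psd_iff {m : Matrix (Fin n) (Fin n) ℂ} (hm : m.IsHermitian) (c : ℝ) :
    (m - (c : ℂ) • 1).PosSemidef ↔ ∀ i, c ≤ hm.eigenvalues i := by
  rw [← conj_diag_eq_sub hm c, psd_conj_iff _ (hm.eigenvectorUnitary).2,
    Matrix.posSemidef_diagonal_iff]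
  constructor
  · intro h i
    have := h i
    rw [Complex.zero_le_real, sub_nonneg] at this
    exact this
  · intro h i
    rw [Complex.zero_le_real, sub_nonneg]
    exact h i

lemma smul_one_sub_psd_iff {m : Matrix (Fin n) (Fin n) ℂ} (hm : m.IsHermitian) (c : ℝ) :
    ((c : ℂ) • 1 - m).PosSemidef ↔ ∀ i, hm.eigenvalues i ≤ c := by
  have key : (c : ℂ) • 1 - m = (hm.eigenvectorUnitary : Matrix (Fin n) (Fin n) ℂ) *
      Matrix.diagonal (fun i => ((c - hm.eigenvalues i : ℝ) : ℂ)) *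
      (star (hm.eigenvectorUnitary : Matrix (Fin n) (Fin n) ℂ)) := by
    have := conj_diag_eq_sub hm c
    have h2 : Matrix.diagonal (fun i => ((c - hm.eigenvalues i : ℝ) : ℂ))
        = - Matrix.diagonal (fun i => ((hm.eigenvalues i - c : ℝ) : ℂ)) := by
      ext i j
      rcases eq_or_ne i j with rfl | h
      · simp [Matrix.diagonal_apply_eq]
      · simp [Matrix.diagonal_apply_ne _ h]
    rw [h2, Matrix.mul_neg, Matrix.neg_mul, this, neg_sub]
  rw [key, psd_conj_iff _ (hm.eigenvectorUnitary).2, Matrix.posSemidef_diagonal_iff]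
  constructor
  · intro h i
    have := h i
    rw [Complex.zero_le_real, sub_nonneg] at this
    exact this
  · intro h i
    rw [Complex.zero_le_real, sub_nonneg]
    exact h i

end loewner

lemma frob_mlog {m : Matrix (Fin n) (Fin n) ℂ} (hm : m.IsHermitian) :
    frob (mlog m) = Real.sqrt (∑ i, (Real.log (hm.eigenvalues i))^2) := by
  set U : Matrix (Fin n) (Fin n) ℂ := (hm.eigenvectorUnitary : Matrix (Fin n) (Fin n) ℂ)
  have hsU : star U * U = 1 := unitary_star_mul_self U (hm.eigenvectorUnitary).2
  set D : Matrix (Fin n) (Fin n) ℂ :=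
    Matrix.diagonal (fun i => (Real.log (hm.eigenvalues i) : ℂ)) with hD
  have hlog : mlog m = U * D * star U := by rw [mlog, dif_pos hm]
  have hconj : (mlog m)ᴴ * mlog m = U * (Dᴴ * D) * star U := by
    rw [hlog]
    calc (U * D * star U)ᴴ * (U * D * star U)
        = (U * Dᴴ * star U) * (U * D * star U) := by
          simp only [Matrix.conjTranspose_mul, Matrix.conjTranspose_conjTranspose,
            Matrix.star_eq_conjTranspose, Matrix.mul_assoc]
      _ = U * (Dᴴ * ((star U * U) * D)) * star U := by simp only [Matrix.mul_assoc]
      _ = U * (Dᴴ * D) * star U := by rw [hsU, one_mul]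
  have htrace : Matrix.trace ((mlog m)ᴴ * mlog m)
      = ((∑ i, (Real.log (hm.eigenvalues i))^2 : ℝ) : ℂ) := by
    rw [hconj, Matrix.trace_mul_cycle, ← Matrix.mul_assoc, hsU, one_mul]
    have hDD : Dᴴ * D = Matrix.diagonal (fun i => (((Real.log (hm.eigenvalues i))^2 : ℝ) : ℂ)) := by
      rw [hD, Matrix.diagonal_conjTranspose, Matrix.diagonal_mul_diagonal]
      congr 1
      funext i
      simp only [Pi.star_apply, RCLike.star_def, Complex.conj_ofReal]
      push_cast
      ring
    rw [hDD, Matrix.trace_diagonal]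
    push_cast
    ring
  rw [frob, htrace, Complex.ofReal_re]

lemma posDef_conj {A B : Matrix (Fin n) (Fin n) ℂ} (hA : A.PosDef) (hB : IsUnit B.det) :
    (Bᴴ * A * B).PosDef := by
  refine Matrix.PosDef.of_dotProduct_mulVec_pos (Matrix.isHermitian_conjTranspose_mul_mul B hA.1) fun ⦃x⦄ hx => ?_
  have hBx : B *ᵥ x ≠ 0 := by
    intro h
    apply hx
    have := congrArg (fun v => B⁻¹ *ᵥ v) h
    simpa [Matrix.mulVec_mulVec, Matrix.nonsing_inv_mul B hB] using this
  have := hA.dotProduct_mulVec_pos hBx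
  simpa only [Matrix.star_mulVec, dotProduct_mulVec, Matrix.vecMul_vecMul] using this

section main
variable {p q : Matrix (Fin n) (Fin n) ℂ}

lemma psqrt_inv_hermitian (hp : p.PosDef) : ((psqrt p)⁻¹)ᴴ = (psqrt p)⁻¹ := by
  rw [Matrix.conjTranspose_nonsing_inv, psqrt_hermitian hp]

lemma mid_posDef (hp : p.PosDef) (hq : q.PosDef) :
    ((psqrt p)⁻¹ * q * (psqrt p)⁻¹).PosDef := by
  have hdet : IsUnit (psqrt p).det := (Matrix.isUnit_iff_isUnit_det _).mp (psqrt_isUnit hp)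
  have hdetinv : IsUnit ((psqrt p)⁻¹).det := by
    rw [Matrix.det_nonsing_inv]
    exact hdet.ringInverse
  have := posDef_conj hq hdetinv
  rwa [psqrt_inv_hermitian hp] at this

lemma conj_sqrt_eq (hp : p.PosDef) (hq : q.PosDef) :
    psqrt p * ((psqrt p)⁻¹ * q * (psqrt p)⁻¹) * psqrt p = q := by
  have hdet : IsUnit (psqrt p).det := (Matrix.isUnit_iff_isUnit_det _).mp (psqrt_isUnit hp)
  calc psqrt p * ((psqrt p)⁻¹ * q * (psqrt p)⁻¹) * psqrt p
      = (psqrt p * (psqrt p)⁻¹) * q * ((psqrt p)⁻¹ * psqrt p) := by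
        simp only [Matrix.mul_assoc]
    _ = q := by rw [Matrix.mul_nonsing_inv _ hdet, Matrix.nonsing_inv_mul _ hdet, one_mul, mul_one]

lemma conj_sqrt_one (hp : p.PosDef) (c : ℝ) :
    psqrt p * ((c : ℂ) • (1 : Matrix (Fin n) (Fin n) ℂ)) * psqrt p = (c : ℂ) • p := by
  rw [Matrix.mul_smul, mul_one, Matrix.smul_mul, psqrt_mul_self hp]

lemma inv_conj_eq (hp : p.PosDef) (a : Matrix (Fin n) (Fin n) ℂ) :
    (psqrt p)⁻¹ * (psqrt p * a * psqrt p) * (psqrt p)⁻¹ = a := by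
  have hdet : IsUnit (psqrt p).det := (Matrix.isUnit_iff_isUnit_det _).mp (psqrt_isUnit hp)
  calc (psqrt p)⁻¹ * (psqrt p * a * psqrt p) * (psqrt p)⁻¹
      = ((psqrt p)⁻¹ * psqrt p) * a * (psqrt p * (psqrt p)⁻¹) := by
        simp only [Matrix.mul_assoc]
    _ = a := by rw [Matrix.mul_nonsing_inv _ hdet, Matrix.nonsing_inv_mul _ hdet, one_mul, mul_one]

/-- forward: small gdist gives a Loewner sandwich -/
lemma gdist_lt_sandwich (hp : p.PosDef) (hq : q.PosDef) {ε : ℝ} (hε : 0 < ε)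
    (h : gdist p q < ε) :
    (q - ((Real.exp (-ε) : ℝ) : ℂ) • p).PosSemidef ∧
      (((Real.exp ε : ℝ) : ℂ) • p - q).PosSemidef := by
  set m := (psqrt p)⁻¹ * q * (psqrt p)⁻¹ with hm
  have hmPD : m.PosDef := mid_posDef hp hq
  have hfr : Real.sqrt (∑ i, (Real.log (hmPD.1.eigenvalues i))^2) < ε := by
    rw [gdist, frob_mlog hmPD.1] at h
    exact h
  have hsum : (∑ i, (Real.log (hmPD.1.eigenvalues i))^2) < ε^2 := by
    have h0 : (0:ℝ) ≤ ∑ i, (Real.log (hmPD.1.eigenvalues i))^2 :=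
      Finset.sum_nonneg fun i _ => sq_nonneg _
    nlinarith [Real.sq_sqrt h0, Real.sqrt_nonneg (∑ i, (Real.log (hmPD.1.eigenvalues i))^2)]
  have heig : ∀ i, Real.exp (-ε) ≤ hmPD.1.eigenvalues i ∧ hmPD.1.eigenvalues i ≤ Real.exp ε := by
    intro i
    have hterm : (Real.log (hmPD.1.eigenvalues i))^2 < ε^2 := by
      have h' := Finset.single_le_sum (f := fun i => (Real.log (hmPD.1.eigenvalues i))^2)
        (fun i _ => sq_nonneg _) (Finset.mem_univ i)
      beta_reduce at h'
      linarith
    have habs : -ε < Real.log (hmPD.1.eigenvalues i) ∧ Real.log (hmPD.1.eigenvalues i) < ε := by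
      constructor <;> nlinarith
    have hpos := hmPD.eigenvalues_pos i
    constructor
    · calc Real.exp (-ε) ≤ Real.exp (Real.log (hmPD.1.eigenvalues i)) :=
          Real.exp_le_exp.mpr habs.1.le
        _ = hmPD.1.eigenvalues i := Real.exp_log hpos
    · calc hmPD.1.eigenvalues i = Real.exp (Real.log (hmPD.1.eigenvalues i)) :=
          (Real.exp_log hpos).symm
        _ ≤ Real.exp ε := Real.exp_le_exp.mpr habs.2.le
  have h1 : (m - ((Real.exp (-ε) : ℝ) : ℂ) • 1).PosSemidef :=
    (sub_smul_one_psd_iff hmPD.1 _).mpr fun i => (heig i).1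
  have h2 : (((Real.exp ε : ℝ) : ℂ) • 1 - m).PosSemidef :=
    (smul_one_sub_psd_iff hmPD.1 _).mpr fun i => (heig i).2
  constructor
  · have := h1.mul_mul_conjTranspose_same (psqrt p)
    rw [psqrt_hermitian hp, Matrix.mul_sub, Matrix.sub_mul] at this
    rwa [show psqrt p * m * psqrt p = q from conj_sqrt_eq hp hq,
      conj_sqrt_one hp (Real.exp (-ε))] at this
  · have := h2.mul_mul_conjTranspose_same (psqrt p)
    rw [psqrt_hermitian hp, Matrix.mul_sub, Matrix.sub_mul] at this
    rwa [show psqrt p * m * psqrt p = q from conj_sqrt_eq hp hq,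
      conj_sqrt_one hp (Real.exp ε)] at this

/-- converse: Loewner sandwich bounds gdist -/
lemma sandwich_gdist_le (hp : p.PosDef) (hq : q.PosDef) {ε : ℝ} (hε : 0 ≤ ε)
    (h1 : (q - ((Real.exp (-ε) : ℝ) : ℂ) • p).PosSemidef)
    (h2 : (((Real.exp ε : ℝ) : ℂ) • p - q).PosSemidef) :
    gdist p q ≤ Real.sqrt n * ε := by
  set m := (psqrt p)⁻¹ * q * (psqrt p)⁻¹ with hm
  have hmPD : m.PosDef := mid_posDef hp hq
  have hinvH := psqrt_inv_hermitian hp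
  have key : ∀ a : Matrix (Fin n) (Fin n) ℂ, a.PosSemidef →
      ((psqrt p)⁻¹ * a * (psqrt p)⁻¹).PosSemidef := by
    intro a ha
    have := ha.mul_mul_conjTranspose_same (psqrt p)⁻¹
    rwa [hinvH] at this
  have e1 : (psqrt p)⁻¹ * (q - ((Real.exp (-ε) : ℝ) : ℂ) • p) * (psqrt p)⁻¹
      = m - ((Real.exp (-ε) : ℝ) : ℂ) • 1 := by
    rw [Matrix.mul_sub, Matrix.sub_mul, hm]
    congr 1
    have : ((Real.exp (-ε) : ℝ) : ℂ) • p = psqrt p * (((Real.exp (-ε) : ℝ) : ℂ) • 1) * psqrt p :=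
      (conj_sqrt_one hp _).symm
    rw [this, inv_conj_eq hp]
  have e2 : (psqrt p)⁻¹ * (((Real.exp ε : ℝ) : ℂ) • p - q) * (psqrt p)⁻¹
      = ((Real.exp ε : ℝ) : ℂ) • 1 - m := by
    rw [Matrix.mul_sub, Matrix.sub_mul, hm]
    congr 1
    have : ((Real.exp ε : ℝ) : ℂ) • p = psqrt p * (((Real.exp ε : ℝ) : ℂ) • 1) * psqrt p :=
      (conj_sqrt_one hp _).symm
    rw [this, inv_conj_eq hp]
  have hm1 : (m - ((Real.exp (-ε) : ℝ) : ℂ) • 1).PosSemidef := by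
    have := key _ h1; rwa [e1] at this
  have hm2 : (((Real.exp ε : ℝ) : ℂ) • 1 - m).PosSemidef := by
    have := key _ h2; rwa [e2] at this
  have heig1 := (sub_smul_one_psd_iff hmPD.1 _).mp hm1
  have heig2 := (smul_one_sub_psd_iff hmPD.1 _).mp hm2
  have hsum : (∑ i, (Real.log (hmPD.1.eigenvalues i))^2) ≤ n * ε^2 := by
    have : ∀ i ∈ Finset.univ, (Real.log (hmPD.1.eigenvalues i))^2 ≤ ε^2 := by
      intro i _
      have hpos := hmPD.eigenvalues_pos i
      have hlo : -ε ≤ Real.log (hmPD.1.eigenvalues i) := by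
        have := Real.log_le_log (Real.exp_pos _) (heig1 i)
        rwa [Real.log_exp] at this
      have hhi : Real.log (hmPD.1.eigenvalues i) ≤ ε := by
        have := Real.log_le_log hpos (heig2 i)
        rwa [Real.log_exp] at this
      nlinarith
    calc (∑ i, (Real.log (hmPD.1.eigenvalues i))^2) ≤ ∑ _i : Fin n, ε^2 :=
        Finset.sum_le_sum this
      _ = n * ε^2 := by simp [Finset.sum_const, nsmul_eq_mul]
  rw [gdist, frob_mlog hmPD.1]
  calc Real.sqrt (∑ i, (Real.log (hmPD.1.eigenvalues i))^2)
      ≤ Real.sqrt (n * ε^2) := Real.sqrt_le_sqrt hsum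
    _ = Real.sqrt n * ε := by
        rw [Real.sqrt_mul (by positivity), Real.sqrt_sq hε]

end main

section entrybound

lemma b_single (d : Matrix (Fin n) (Fin n) ℂ) (a b : Fin n) :
    star (Pi.single a (1:ℂ)) ⬝ᵥ (d *ᵥ Pi.single b 1) = d a b := by
  simp [Matrix.mulVec_single, dotProduct, Pi.single_apply, Pi.star_apply, apply_ite]

lemma qf_bilinear (d : Matrix (Fin n) (Fin n) ℂ) (x y : Fin n → ℂ) (θ : ℂ) :
    star (x + θ • y) ⬝ᵥ (d *ᵥ (x + θ • y)) =
      star x ⬝ᵥ (d *ᵥ x) + θ * (star x ⬝ᵥ (d *ᵥ y)) + star θ * (star y ⬝ᵥ (d *ᵥ x))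
        + star θ * θ * (star y ⬝ᵥ (d *ᵥ y)) := by
  simp only [star_add, star_smul, Matrix.mulVec_add, Matrix.mulVec_smul,
    add_dotProduct, dotProduct_add, smul_dotProduct,
    dotProduct_smul, smul_eq_mul]
  ring

lemma qf_norm_le (B : Matrix (Fin n) (Fin n) ℂ) (x : Fin n → ℂ) (hx : ∀ a, ‖x a‖ ≤ 1) :
    ‖star x ⬝ᵥ (B *ᵥ x)‖ ≤ ∑ a, ∑ b, ‖B a b‖ := by
  rw [dotProduct]
  refine (norm_sum_le _ _).trans (Finset.sum_le_sum fun a _ => ?_)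
  have hin : ‖(B *ᵥ x) a‖ ≤ ∑ b, ‖B a b‖ := by
    rw [Matrix.mulVec, dotProduct]
    refine (norm_sum_le _ _).trans (Finset.sum_le_sum fun b _ => ?_)
    rw [norm_mul]
    calc ‖B a b‖ * ‖x b‖ ≤ ‖B a b‖ * 1 :=
        mul_le_mul_of_nonneg_left (hx b) (norm_nonneg _)
      _ = ‖B a b‖ := mul_one _
  calc ‖star x a * (B *ᵥ x) a‖ = ‖star x a‖ * ‖(B *ᵥ x) a‖ := norm_mul _ _
    _ ≤ 1 * (∑ b, ‖B a b‖) := by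
        refine mul_le_mul ?_ hin (norm_nonneg _) zero_le_one
        rw [Pi.star_apply, norm_star]
        exact hx a
    _ = ∑ b, ‖B a b‖ := one_mul _

lemma sandwich_qf {B d : Matrix (Fin n) (Fin n) ℂ}
    (h1 : (B - d).PosSemidef) (h2 : (B + d).PosSemidef) (x : Fin n → ℂ)
    (hx : ∀ a, ‖x a‖ ≤ 1) :
    (star x ⬝ᵥ (d *ᵥ x)).im = 0 ∧
      |(star x ⬝ᵥ (d *ᵥ x)).re| ≤ ∑ a, ∑ b, ‖B a b‖ := by
  set z := star x ⬝ᵥ (d *ᵥ x) with hz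
  set w := star x ⬝ᵥ (B *ᵥ x) with hw
  have g1 : (0 : ℂ) ≤ w - z := by
    have := h1.dotProduct_mulVec_nonneg x
    rwa [Matrix.sub_mulVec, dotProduct_sub] at this
  have g2 : (0 : ℂ) ≤ w + z := by
    have := h2.dotProduct_mulVec_nonneg x
    rwa [Matrix.add_mulVec, dotProduct_add] at this
  rw [Complex.le_def] at g1 g2
  simp only [Complex.zero_re, Complex.zero_im, Complex.sub_re, Complex.sub_im,
    Complex.add_re, Complex.add_im] at g1 g2
  have him : z.im = 0 := by linarith [g1.2, g2.2]
  refine ⟨him, ?_⟩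
  have hwnorm : w.re ≤ ‖w‖ := by
    exact Complex.re_le_norm w
  have hC := qf_norm_le B x hx
  rw [← hw] at hC
  rw [abs_le]
  constructor <;> linarith [g1.1, g2.1]

lemma entry_bound {B d : Matrix (Fin n) (Fin n) ℂ} (hd : d.IsHermitian)
    (h1 : (B - d).PosSemidef) (h2 : (B + d).PosSemidef) (i j : Fin n) :
    ‖d i j‖ ≤ 3 * ∑ a, ∑ b, ‖B a b‖ := by
  set C := ∑ a, ∑ b, ‖B a b‖ with hC
  have hC0 : 0 ≤ C := Finset.sum_nonneg fun a _ => Finset.sum_nonneg fun b _ => norm_nonneg _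
  have hsingle : ∀ a : Fin n, ∀ c : Fin n, ‖(Pi.single a (1:ℂ) : Fin n → ℂ) c‖ ≤ 1 := by
    intro a c
    rcases eq_or_ne c a with rfl | h
    · simp
    · simp [Pi.single_apply, h]
  -- diagonal entries
  have hdiag : ∀ a : Fin n, (d a a).im = 0 ∧ |(d a a).re| ≤ C := by
    intro a
    have := sandwich_qf h1 h2 (Pi.single a 1) (hsingle a)
    rwa [b_single] at this
  rcases eq_or_ne i j with rfl | hij
  · obtain ⟨him, hre⟩ := hdiag i
    have hb : ‖d i i‖ ≤ |(d i i).re| + |(d i i).im| := by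
      exact Complex.norm_le_abs_re_add_abs_im _
    rw [him] at hb
    simp only [abs_zero, add_zero] at hb
    linarith
  · -- off diagonal
    have hxent : ∀ θ : ℂ, ‖θ‖ ≤ 1 →
        ∀ c, ‖((Pi.single i (1:ℂ) : Fin n → ℂ) + θ • (Pi.single j (1:ℂ) : Fin n → ℂ)) c‖ ≤ 1 := by
      intro θ hθ c
      simp only [Pi.add_apply, Pi.smul_apply, Pi.single_apply, smul_eq_mul]
      rcases eq_or_ne c i with rfl | hci
      · rw [if_pos rfl, if_neg hij]
        simp
      · rcases eq_or_ne c j with rfl | hcj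
        · rw [if_neg hci, if_pos rfl]
          simpa using hθ
        · rw [if_neg hci, if_neg hcj]
          simp
    have hqf : ∀ θ : ℂ,
        star ((Pi.single i (1:ℂ) : Fin n → ℂ) + θ • (Pi.single j (1:ℂ) : Fin n → ℂ)) ⬝ᵥ
          (d *ᵥ ((Pi.single i (1:ℂ) : Fin n → ℂ) + θ • (Pi.single j (1:ℂ) : Fin n → ℂ)))
          = d i i + θ * d i j + star θ * d j i + star θ * θ * d j j := by
      intro θ
      rw [qf_bilinear, b_single, b_single, b_single, b_single]
    have hji : d j i = (starRingEnd ℂ) (d i j) := (hd.apply j i).symm ▸ rfl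
    -- θ = 1
    obtain ⟨him1, hre1⟩ := sandwich_qf h1 h2 _ (hxent 1 (by norm_num))
    rw [hqf 1] at him1 hre1
    -- θ = I
    obtain ⟨himI, hreI⟩ := sandwich_qf h1 h2 _ (hxent Complex.I (by simp))
    rw [hqf Complex.I] at himI hreI
    have e1 : d i i + 1 * d i j + star (1:ℂ) * d j i + star (1:ℂ) * 1 * d j j
        = d i i + d j j + ((2 * (d i j).re : ℝ) : ℂ) := by
      rw [hji, star_one, one_mul, one_mul, one_mul, ← Complex.add_conj]
      ring
    have eI : d i i + Complex.I * d i j + star Complex.I * d j i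
          + star Complex.I * Complex.I * d j j
        = d i i + d j j - ((2 * (d i j).im : ℝ) : ℂ) := by
      rw [hji, Complex.star_def, Complex.conj_I]
      have hsub : d i j - (starRingEnd ℂ) (d i j) = ((2 * (d i j).im : ℝ) : ℂ) * Complex.I :=
        Complex.sub_conj _
      have hI2 : Complex.I * Complex.I = -1 := Complex.I_mul_I
      linear_combination Complex.I * hsub + (((2 * (d i j).im : ℝ) : ℂ) - d j j) * hI2
    rw [e1] at him1 hre1
    rw [eI] at himI hreI
    obtain ⟨himi, hrei⟩ := hdiag i
    obtain ⟨himj, hrej⟩ := hdiag j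
    simp only [Complex.add_re, Complex.add_im, Complex.sub_re, Complex.sub_im,
      Complex.ofReal_re, Complex.ofReal_im] at him1 hre1 himI hreI
    have hre_bound : |(d i j).re| ≤ 3 * C / 2 := by
      rw [abs_le] at hre1 hrei hrej ⊢
      constructor <;> nlinarith [hre1.1, hre1.2, hrei.1, hrei.2, hrej.1, hrej.2]
    have him_bound : |(d i j).im| ≤ 3 * C / 2 := by
      rw [abs_le] at hreI hrei hrej ⊢
      constructor <;> nlinarith [hreI.1, hreI.2, hrei.1, hrei.2, hrej.1, hrej.2]
    have hb : ‖d i j‖ ≤ |(d i j).re| + |(d i j).im| := by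
      exact Complex.norm_le_abs_re_add_abs_im _
    linarith

end entrybound

section limits
open Filter

lemma qf_sub (A B : Matrix (Fin n) (Fin n) ℂ) (x : Fin n → ℂ) :
    star x ⬝ᵥ ((A - B) *ᵥ x) = star x ⬝ᵥ (A *ᵥ x) - star x ⬝ᵥ (B *ᵥ x) := by
  rw [Matrix.sub_mulVec, dotProduct_sub]

lemma qf_add (A B : Matrix (Fin n) (Fin n) ℂ) (x : Fin n → ℂ) :
    star x ⬝ᵥ ((A + B) *ᵥ x) = star x ⬝ᵥ (A *ᵥ x) + star x ⬝ᵥ (B *ᵥ x) := by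
  rw [Matrix.add_mulVec, dotProduct_add]

lemma smul_hermitian {p : Matrix (Fin n) (Fin n) ℂ} (hp : p.IsHermitian) (c : ℝ) :
    ((c : ℂ) • p).IsHermitian := by
  rw [Matrix.IsHermitian, Matrix.conjTranspose_smul, hp.eq]
  congr 1
  rw [Complex.star_def, Complex.conj_ofReal]

lemma smul_posSemidef {p : Matrix (Fin n) (Fin n) ℂ} (hp : p.PosSemidef) {c : ℝ} (hc : 0 ≤ c) :
    ((c : ℂ) • p).PosSemidef := by
  refine Matrix.PosSemidef.of_dotProduct_mulVec_nonneg (smul_hermitian hp.1 c) fun x => ?_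
  rw [Matrix.smul_mulVec, dotProduct_smul, smul_eq_mul]
  exact mul_nonneg (Complex.zero_le_real.mpr hc) (hp.dotProduct_mulVec_nonneg x)

lemma smul_posDef {p : Matrix (Fin n) (Fin n) ℂ} (hp : p.PosDef) {c : ℝ} (hc : 0 < c) :
    ((c : ℂ) • p).PosDef := by
  refine Matrix.PosDef.of_dotProduct_mulVec_pos (smul_hermitian hp.1 c) fun ⦃x⦄ hx => ?_
  rw [Matrix.smul_mulVec, dotProduct_smul, smul_eq_mul]
  exact mul_pos (Complex.zero_lt_real.mpr hc) (hp.dotProduct_mulVec_pos hx)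

lemma psd_limit {A : ℕ → Matrix (Fin n) (Fin n) ℂ} {L : Matrix (Fin n) (Fin n) ℂ}
    (hH : L.IsHermitian)
    (hconv : ∀ x : Fin n → ℂ,
      Tendsto (fun k => star x ⬝ᵥ (A k *ᵥ x)) atTop (nhds (star x ⬝ᵥ (L *ᵥ x))))
    (hA : ∀ᶠ k in atTop, (A k).PosSemidef) : L.PosSemidef := by
  refine Matrix.PosSemidef.of_dotProduct_mulVec_nonneg hH fun x => ?_
  set z : ℕ → ℂ := fun k => star x ⬝ᵥ (A k *ᵥ x) with hz
  set w : ℂ := star x ⬝ᵥ (L *ᵥ x) with hw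
  have hre : Tendsto (fun k => (z k).re) atTop (nhds w.re) :=
    (Complex.continuous_re.tendsto _).comp (hconv x)
  have him : Tendsto (fun k => (z k).im) atTop (nhds w.im) :=
    (Complex.continuous_im.tendsto _).comp (hconv x)
  have hnn : ∀ᶠ k in atTop, 0 ≤ (z k).re ∧ (z k).im = 0 := by
    filter_upwards [hA] with k hk
    have := hk.dotProduct_mulVec_nonneg x
    rw [Complex.le_def] at this
    simp only [Complex.zero_re, Complex.zero_im] at this
    exact ⟨this.1, this.2.symm⟩
  have h1 : 0 ≤ w.re := by
    refine ge_of_tendsto hre ?_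
    filter_upwards [hnn] with k hk using hk.1
  have h2 : w.im = 0 := by
    have : Tendsto (fun _ : ℕ => (0:ℝ)) atTop (nhds w.im) := by
      refine him.congr' ?_
      filter_upwards [hnn] with k hk using hk.2
    exact tendsto_nhds_unique this tendsto_const_nhds
  rw [Complex.le_def]
  simp only [Complex.zero_re, Complex.zero_im]
  exact ⟨h1, h2.symm⟩

end limits

open Filter

set_option maxHeartbeats 2000000 in
theorem posDef_gdist_complete' (p : ℕ → Matrix (Fin n) (Fin n) ℂ)
    (hp : ∀ k, (p k).PosDef)
    (hcauchy : ∀ ε > (0 : ℝ), ∃ N : ℕ, ∀ j ≥ N, ∀ k ≥ N, gdist (p j) (p k) < ε) :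
    ∃ q : Matrix (Fin n) (Fin n) ℂ, q.PosDef ∧
      Tendsto (fun k => gdist (p k) q) atTop (nhds 0) := by
  obtain ⟨N₁, hN₁⟩ := hcauchy 1 one_pos
  have hsand : ∀ ε > (0:ℝ), ∃ N, ∀ j ≥ N, ∀ k ≥ N,
      ((p k) - ((Real.exp (-ε) : ℝ) : ℂ) • (p j)).PosSemidef ∧
      (((Real.exp ε : ℝ) : ℂ) • (p j) - (p k)).PosSemidef := by
    intro ε hε
    obtain ⟨N, hN⟩ := hcauchy ε hε
    exact ⟨N, fun j hj k hk => gdist_lt_sandwich (hp j) (hp k) hε (hN j hj k hk)⟩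
  set K₀ : ℝ := ∑ a, ∑ b, ‖p N₁ a b‖ with hK₀
  have hK₀0 : 0 ≤ K₀ :=
    Finset.sum_nonneg fun a _ => Finset.sum_nonneg fun b _ => norm_nonneg _
  set K : ℝ := 3 * (Real.exp 1 * K₀) with hK
  have hK0 : 0 ≤ K := by positivity
  have hBnorm : ∀ (c : ℝ), 0 ≤ c → ∀ (r : Matrix (Fin n) (Fin n) ℂ),
      (∑ a, ∑ b, ‖((c : ℂ) • r) a b‖) = c * ∑ a, ∑ b, ‖r a b‖ := by
    intro c hc r
    rw [Finset.mul_sum]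
    refine Finset.sum_congr rfl fun a _ => ?_
    rw [Finset.mul_sum]
    refine Finset.sum_congr rfl fun b _ => ?_
    rw [Matrix.smul_apply, norm_smul, Complex.norm_real, Real.norm_eq_abs, abs_of_nonneg hc]
  have hentry : ∀ j, N₁ ≤ j → ∀ a b, ‖p j a b‖ ≤ K := by
    intro j hj a b
    obtain ⟨h1, h2⟩ := gdist_lt_sandwich (hp N₁) (hp j) one_pos (hN₁ N₁ le_rfl j hj)
    have hBpd : (((Real.exp 1 : ℝ) : ℂ) • p N₁ + p j).PosSemidef := by
      have hplus : ((Real.exp 1 : ℝ) : ℂ) • p N₁ + p j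
          = (p j - ((Real.exp (-1) : ℝ) : ℂ) • p N₁)
            + ((Real.exp (-1) + Real.exp 1 : ℝ) : ℂ) • p N₁ := by
        push_cast
        module
      rw [hplus]
      exact h1.add (smul_posSemidef (hp N₁).posSemidef (by positivity))
    have hb := entry_bound (hp j).1 h2 hBpd a b
    rwa [hBnorm _ (Real.exp_pos 1).le, ← hK₀, ← hK] at hb
  have hcau : ∀ a b, CauchySeq (fun k => p k a b) := by
    intro a b
    rw [Metric.cauchySeq_iff]
    intro δ hδ
    set D : ℝ := 3 * ((n:ℝ)^2 * K) with hD
    have hD0 : 0 ≤ D := by positivity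
    set δ' : ℝ := min 1 (δ / (D + 3)) with hδ'
    have hδ'pos : 0 < δ' := lt_min one_pos (by positivity)
    have hδ'le : δ' ≤ δ / (D + 3) := min_le_right _ _
    set ε : ℝ := Real.log (1 + δ') with hε
    have hεpos : 0 < ε := Real.log_pos (by linarith)
    have heq : Real.exp ε = 1 + δ' := Real.exp_log (by linarith)
    obtain ⟨N, hN⟩ := hsand ε hεpos
    refine ⟨max N N₁, fun j hj k hk => ?_⟩
    obtain ⟨h1, h2⟩ := hN j (le_of_max_le_left hj) k (le_of_max_le_left hk)
    have h2' : (((Real.exp ε - 1 : ℝ) : ℂ) • p j - (p k - p j)).PosSemidef := by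
      have : ((Real.exp ε - 1 : ℝ) : ℂ) • p j - (p k - p j)
          = ((Real.exp ε : ℝ) : ℂ) • p j - p k := by
        push_cast
        module
      rw [this]
      exact h2
    have hAM : 0 ≤ Real.exp (-ε) + Real.exp ε - 2 := by
      have h1' : Real.exp (-ε) = (Real.exp ε)⁻¹ := Real.exp_neg ε
      have h2'' : (Real.exp ε)⁻¹ * Real.exp ε = 1 :=
        inv_mul_cancel₀ (Real.exp_pos ε).ne'
      nlinarith [sq_nonneg (Real.exp ε - 1), Real.exp_pos ε]
    have h1' : (((Real.exp ε - 1 : ℝ) : ℂ) • p j + (p k - p j)).PosSemidef := by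
      have : ((Real.exp ε - 1 : ℝ) : ℂ) • p j + (p k - p j)
          = (p k - ((Real.exp (-ε) : ℝ) : ℂ) • p j)
            + ((Real.exp (-ε) + Real.exp ε - 2 : ℝ) : ℂ) • p j := by
        push_cast
        module
      rw [this]
      exact h1.add (smul_posSemidef (hp j).posSemidef hAM)
    have hd : (p k - p j).IsHermitian := ((hp k).1).sub ((hp j).1)
    have hb := entry_bound hd h2' h1' a b
    have hc1 : (0:ℝ) ≤ Real.exp ε - 1 := by rw [heq]; linarith
    rw [hBnorm _ hc1] at hb
    have hsum2 : ∑ a', ∑ b', ‖p j a' b'‖ ≤ (n:ℝ)^2 * K := by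
      have : ∑ a', ∑ b', ‖p j a' b'‖ ≤ ∑ _a' : Fin n, ∑ _b' : Fin n, K := by
        refine Finset.sum_le_sum fun a' _ => Finset.sum_le_sum fun b' _ => ?_
        exact hentry j (le_of_max_le_right hj) a' b'
      simpa [Finset.sum_const, nsmul_eq_mul, pow_two, mul_assoc] using this
    have hbb : ‖p k a b - p j a b‖ ≤ 3 * (δ' * ((n:ℝ)^2 * K)) := by
      have hsub : (p k - p j) a b = p k a b - p j a b := Matrix.sub_apply _ _ _ _
      rw [hsub] at hb
      have : (Real.exp ε - 1) * (∑ a', ∑ b', ‖p j a' b'‖) ≤ δ' * ((n:ℝ)^2 * K) := by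
        rw [heq]
        have : (1 + δ' - 1) = δ' := by ring
        rw [this]
        exact mul_le_mul_of_nonneg_left hsum2 hδ'pos.le
      linarith
    have hfin : 3 * (δ' * ((n:ℝ)^2 * K)) < δ := by
      have h3 : D * δ' ≤ D * (δ / (D + 3)) := mul_le_mul_of_nonneg_left hδ'le hD0
      have h4 : D * (δ / (D + 3)) < δ := by
        rw [mul_div_assoc'] at *
        rw [div_lt_iff₀ (by positivity)]
        nlinarith
      have : 3 * (δ' * ((n:ℝ)^2 * K)) = D * δ' := by rw [hD]; ring
      linarith
    rw [Complex.dist_eq]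
    have habs : ‖p j a b - p k a b‖ = ‖p k a b - p j a b‖ := by
      exact norm_sub_rev _ _
    rw [habs]
    linarith
  have hconv : ∀ a b, ∃ l, Tendsto (fun k => p k a b) atTop (nhds l) :=
    fun a b => cauchySeq_tendsto_of_complete (hcau a b)
  choose L hL using hconv
  set q : Matrix (Fin n) (Fin n) ℂ := Matrix.of L with hq
  have hqab : ∀ a b, Tendsto (fun k => p k a b) atTop (nhds (q a b)) := hL
  have hqf : ∀ x : Fin n → ℂ,
      Tendsto (fun k => star x ⬝ᵥ (p k *ᵥ x)) atTop (nhds (star x ⬝ᵥ (q *ᵥ x))) := by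
    intro x
    have hrw : ∀ (A : Matrix (Fin n) (Fin n) ℂ),
        star x ⬝ᵥ (A *ᵥ x) = ∑ a, star (x a) * ∑ b, A a b * x b := by
      intro A
      simp [dotProduct, Matrix.mulVec, Finset.mul_sum]
    simp only [hrw]
    refine tendsto_finset_sum _ fun a _ => ?_
    refine Tendsto.const_mul _ ?_
    exact tendsto_finset_sum _ fun b _ => (hqab a b).mul_const (x b)
  have hqH : q.IsHermitian := by
    rw [Matrix.IsHermitian]
    ext a b
    rw [Matrix.conjTranspose_apply]
    have h1 : Tendsto (fun k => star (p k b a)) atTop (nhds (star (q b a))) :=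
      (hqab b a).star
    have h2 : (fun k => star (p k b a)) = fun k => p k a b :=
      funext fun k => (hp k).1.apply a b
    rw [h2] at h1
    exact tendsto_nhds_unique h1 (hqab a b)
  have hsandq : ∀ ε > (0:ℝ), ∃ N, ∀ j ≥ N,
      (q - ((Real.exp (-ε) : ℝ) : ℂ) • (p j)).PosSemidef ∧
      (((Real.exp ε : ℝ) : ℂ) • (p j) - q).PosSemidef := by
    intro ε hε
    obtain ⟨N, hN⟩ := hsand ε hε
    refine ⟨N, fun j hj => ⟨?_, ?_⟩⟩
    · refine psd_limit (A := fun k => p k - ((Real.exp (-ε) : ℝ) : ℂ) • (p j))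
        (hqH.sub (smul_hermitian (hp j).1 _)) ?_ ?_
      · intro x
        simp only [qf_sub]
        exact Tendsto.sub_const (hqf x) _
      · filter_upwards [eventually_ge_atTop N] with k hk
        exact (hN j hj k hk).1
    · refine psd_limit (A := fun k => ((Real.exp ε : ℝ) : ℂ) • (p j) - p k)
        ((smul_hermitian (hp j).1 _).sub hqH) ?_ ?_
      · intro x
        simp only [qf_sub]
        exact Tendsto.const_sub _ (hqf x)
      · filter_upwards [eventually_ge_atTop N] with k hk
        exact (hN j hj k hk).2
  have hqPD : q.PosDef := by
    obtain ⟨N₂, hN₂⟩ := hsandq 1 one_pos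
    have h1 := (hN₂ N₂ le_rfl).1
    have hsplit : q = (q - ((Real.exp (-1) : ℝ) : ℂ) • p N₂)
        + ((Real.exp (-1) : ℝ) : ℂ) • p N₂ := (sub_add_cancel _ _).symm
    rw [hsplit]
    exact Matrix.PosDef.posSemidef_add h1 (smul_posDef (hp N₂) (Real.exp_pos _))
  refine ⟨q, hqPD, ?_⟩
  rw [Metric.tendsto_atTop]
  intro δ hδ
  set ε : ℝ := δ / (2 * (Real.sqrt n + 1)) with hε
  have hs0 : (0:ℝ) ≤ Real.sqrt n := Real.sqrt_nonneg _
  have hεpos : 0 < ε := by positivity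
  obtain ⟨N, hN⟩ := hsandq ε hεpos
  refine ⟨N, fun k hk => ?_⟩
  obtain ⟨h1, h2⟩ := hN k hk
  have hle := sandwich_gdist_le (hp k) hqPD hεpos.le h1 h2
  have hnn : 0 ≤ gdist (p k) q := Real.sqrt_nonneg _
  rw [Real.dist_eq, sub_zero, abs_of_nonneg hnn]
  have hlt : Real.sqrt n * ε < δ := by
    rw [hε]
    rw [mul_div_assoc']
    rw [div_lt_iff₀ (by positivity)]
    nlinarith
  linarith


end AuxiliaryLemmas

/-- The space of positive definite matrices with the geodesic distance
`dist(p,q) = ‖log(p^{-1/2} q p^{-1/2})‖_F` is complete: every Cauchy sequence converges. -/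
theorem posDef_gdist_complete {n : ℕ} (p : ℕ → Matrix (Fin n) (Fin n) ℂ)
    (hp : ∀ k, (p k).PosDef)
    (hcauchy : ∀ ε > (0 : ℝ), ∃ N : ℕ, ∀ j ≥ N, ∀ k ≥ N, gdist (p j) (p k) < ε) :
    ∃ q : Matrix (Fin n) (Fin n) ℂ, q.PosDef ∧
      Tendsto (fun k => gdist (p k) q) atTop (nhds 0) := by
  exact posDef_gdist_complete' p hp hcauchy
end
end
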